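/- arXiv:1402.7211 — 3 statements merged into one kernel-verified Lean document; each statement's English description precedes it below -/
import Mathlib

section
/- Let T be a triangulated category with products, and C, G two Σ-stable sets of objects such that Ψ(C)^s ⊆ Φ(G) for some positive integer s, where Ψ(C) is the ideal of C-cophantoms and Φ(G) the ideal of G-phantoms. Then every object Y of T fits into a triangle X →^φ Y → Z → ΣX with Z ∈ Prod_s(C) and φ ∈ Φ(G). -/
open CategoryTheory CategoryTheory.Limits CategoryTheory.Pretriangulated

universe v u

variable {C : Type u} [Category.{v} C]

def SigmaStable [HasShift C ℤ] (S : Set C) : Prop :=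
  ∀ X ∈ S, X⟦(1 : ℤ)⟧ ∈ S ∧ X⟦(-1 : ℤ)⟧ ∈ S

def IsPhantom [Limits.HasZeroMorphisms C] (𝒢 : Set C) {X Y : C} (φ : X ⟶ Y) : Prop :=
  ∀ G ∈ 𝒢, ∀ f : G ⟶ X, f ≫ φ = 0

def IsCophantom [Limits.HasZeroMorphisms C] (𝒞 : Set C) {X Y : C} (ψ : X ⟶ Y) : Prop :=
  ∀ c ∈ 𝒞, ∀ g : Y ⟶ c, ψ ≫ g = 0

def ProdCls (𝒞 : Set C) : Set C :=
  {Z | ∃ (ι : Type (max u v)) (f : ι → C) (_ : ∀ i, f i ∈ 𝒞) (_ : HasProduct f)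
    (r : (∏ᶜ f) ⟶ Z) (s : Z ⟶ ∏ᶜ f), s ≫ r = 𝟙 Z}

/-- `ProdN 𝒞 n` is `Prod_{n+1}(𝒞)`: `Prod_1(𝒞) = Prod 𝒞` and `Prod_{n+1}(𝒞)` consists
of the objects `Y` fitting into a triangle `X ⟶ Y ⟶ Z ⟶ ΣX` with `X ∈ Prod_1(𝒞)` and
`Z ∈ Prod_n(𝒞)`. -/
def ProdN [Preadditive C] [HasZeroObject C] [HasShift C ℤ]
    [∀ n : ℤ, (shiftFunctor C n).Additive] [Pretriangulated C]
    (𝒞 : Set C) : ℕ → Set C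
  | 0 => ProdCls 𝒞
  | n + 1 => {Y | ∃ (X Z : C) (f : X ⟶ Y) (g : Y ⟶ Z) (h : Z ⟶ X⟦(1 : ℤ)⟧),
      Triangle.mk f g h ∈ (distTriang C) ∧ X ∈ ProdCls 𝒞 ∧ Z ∈ ProdN 𝒞 n}

/-- `compPow I n` : composites of `n+1` maps each satisfying `I`; these generate the
ideal `I^{n+1}`. -/
def compPow (I : MorphismProperty C) : ℕ → MorphismProperty C
  | 0 => I
  | n + 1 => fun X Z f => ∃ (Y : C) (g : X ⟶ Y) (h : Y ⟶ Z),
      I g ∧ compPow I n h ∧ f = g ≫ h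

/-- A composite of cophantoms (in the `compPow` sense) is itself a cophantom, since its
first factor is one. -/
lemma compPow_isCophantom [Preadditive C] (𝒞 : Set C) :
    ∀ (n : ℕ) ⦃X Y : C⦄ (f : X ⟶ Y),
      compPow (fun _ _ ψ => IsCophantom 𝒞 ψ) n f → IsCophantom 𝒞 f
  | 0, _, _, _, hf => hf
  | n + 1, X, Y, f, ⟨M, g, h, hg, _, hf⟩ => by
      intro c hc ρ
      rw [hf, Category.assoc]
      exact hg c hc (h ≫ ρ)

/-- The canonical map from `X` into the product of all `𝒞`-objects under `X`. -/
lemma exists_canonical_map [Preadditive C] [HasProducts.{max u v} C]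
    (𝒞 : Set C) (X : C) :
    ∃ (P : C) (uu : X ⟶ P), P ∈ ProdCls 𝒞 ∧
      ∀ c ∈ 𝒞, ∀ γ : X ⟶ c, ∃ π : P ⟶ c, uu ≫ π = γ := by
  let ι : Type (max u v) := (c : 𝒞) × (X ⟶ (c : C))
  let f : ι → C := fun i => (i.1 : C)
  have hf : ∀ i, f i ∈ 𝒞 := fun i => i.1.2
  refine ⟨∏ᶜ f, Pi.lift (fun i => i.2), ⟨ι, f, hf, inferInstance, 𝟙 _, 𝟙 _, by simp⟩, ?_⟩
  intro c hc γ
  exact ⟨Pi.π f ⟨⟨c, hc⟩, γ⟩, by simp⟩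

/-- Main inductive construction: every `Y` admits a triangle `X ⟶ Y ⟶ Z ⟶ ΣX` with
`Z ∈ ProdN 𝒞 n` and `X ⟶ Y` a composite of `n+1` cophantoms. -/
lemma exists_cophantom_triangle [Preadditive C] [HasZeroObject C] [HasShift C ℤ]
    [∀ n : ℤ, (shiftFunctor C n).Additive] [Pretriangulated C]
    [HasProducts.{max u v} C] (𝒞 : Set C) :
    ∀ (n : ℕ) (Y : C), ∃ (X Z : C) (φ : X ⟶ Y) (g : Y ⟶ Z) (δ : Z ⟶ X⟦(1 : ℤ)⟧),
      Triangle.mk φ g δ ∈ (distTriang C) ∧ Z ∈ ProdN 𝒞 n ∧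
      compPow (fun _ _ ψ => IsCophantom 𝒞 ψ) n φ := by
  intro n
  induction n with
  | zero =>
    intro Y
    obtain ⟨P, uu, hP, hfac⟩ := exists_canonical_map 𝒞 Y
    obtain ⟨X, φ, δ, mem⟩ := distinguished_cocone_triangle₁ uu
    refine ⟨X, P, φ, uu, δ, mem, hP, ?_⟩
    intro c hc γ
    obtain ⟨π, hπ⟩ := hfac c hc γ
    have h0 : φ ≫ uu = 0 := comp_distTriang_mor_zero₁₂ _ mem
    rw [← hπ, ← Category.assoc, h0, zero_comp]
  | succ n ih =>
    intro Y
    obtain ⟨Xn, Zn, φn, vn, δn, hTn, hZn, hφn⟩ := ih Y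
    obtain ⟨P, uu, hP, hfac⟩ := exists_canonical_map 𝒞 Xn
    -- the connecting map and the extension `W` of `Zn` by `P`
    obtain ⟨W, q, p, memW⟩ :=
      distinguished_cocone_triangle₂ (δn ≫ uu⟦(1 : ℤ)⟧' : Zn ⟶ P⟦(1 : ℤ)⟧)
    -- lift `vn : Y ⟶ Zn` through `p : W ⟶ Zn`
    have hz23 : vn ≫ δn = 0 := comp_distTriang_mor_zero₂₃ _ hTn
    obtain ⟨w, hw⟩ : ∃ w : Y ⟶ W, vn = w ≫ p := Triangle.coyoneda_exact₃ _ memW vn (by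
      change vn ≫ (δn ≫ uu⟦(1 : ℤ)⟧') = 0
      rw [← Category.assoc, hz23, zero_comp])
    change vn = w ≫ p at hw
    -- complete `w` to a triangle
    obtain ⟨X', φ', δ', memT'⟩ := distinguished_cocone_triangle₁ w
    -- map of triangles over `(𝟙 Y, p)`
    obtain ⟨t, ht1, ht3⟩ : ∃ t : X' ⟶ Xn, φ' ≫ 𝟙 Y = t ≫ φn ∧
        δ' ≫ t⟦(1 : ℤ)⟧' = p ≫ δn := complete_distinguished_triangle_morphism₁
      (Triangle.mk φ' w δ') (Triangle.mk φn vn δn) memT' hTn (𝟙 Y) p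
      (by change w ≫ p = 𝟙 Y ≫ vn; rw [← hw, Category.id_comp])
    change φ' ≫ 𝟙 Y = t ≫ φn at ht1
    change δ' ≫ t⟦(1 : ℤ)⟧' = p ≫ δn at ht3
    rw [Category.comp_id] at ht1
    -- `t ≫ uu` is killed by `δ'` after shifting
    have hpe : p ≫ (δn ≫ uu⟦(1 : ℤ)⟧') = 0 := comp_distTriang_mor_zero₂₃ _ memW
    have hd : δ' ≫ (t ≫ uu)⟦(1 : ℤ)⟧' = 0 := by
      rw [Functor.map_comp, ← Category.assoc, ht3, Category.assoc, hpe]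
    -- hence `t ≫ uu` factors through `φ'`
    obtain ⟨g1, hg1⟩ : ∃ g1 : Y⟦(1 : ℤ)⟧ ⟶ P⟦(1 : ℤ)⟧,
        (t ≫ uu)⟦(1 : ℤ)⟧' = (-(φ'⟦(1 : ℤ)⟧')) ≫ g1 := by
      obtain ⟨g, hg⟩ := Triangle.yoneda_exact₃ _ (rot_of_distTriang _ memT')
        ((t ≫ uu)⟦(1 : ℤ)⟧') hd
      exact ⟨g, hg⟩
    have hr : t ≫ uu = φ' ≫ (shiftFunctor C (1 : ℤ)).preimage (-g1) := by
      apply (shiftFunctor C (1 : ℤ)).map_injective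
      rw [hg1, Functor.map_comp, Functor.map_preimage]
      simp only [Preadditive.neg_comp, Preadditive.comp_neg]
    set r : Y ⟶ P := (shiftFunctor C (1 : ℤ)).preimage (-g1) with hrdef
    -- `t` is a cophantom
    have htC : IsCophantom 𝒞 t := by
      intro c hc γ
      obtain ⟨π, hπ⟩ := hfac c hc γ
      have h1 : t ≫ γ = φ' ≫ (r ≫ π) := by
        rw [← hπ, ← Category.assoc, hr, Category.assoc]
      rw [h1, ht1, Category.assoc,
        compPow_isCophantom 𝒞 n φn hφn c hc (r ≫ π), comp_zero]
    exact ⟨X', W, φ', w, δ', memT', ⟨P, Zn, q, p, _, memW, hP, hZn⟩,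
      ⟨Xn, t, φn, htC, hφn, ht1⟩⟩

/-- If `Ψ(𝒞)^s ⊆ Φ(𝒢)`, then every `Y` fits into a triangle `X ⟶ Y ⟶ Z ⟶ ΣX` with
`Z ∈ Prod_s(𝒞)` and `φ : X ⟶ Y` a `𝒢`-phantom. -/
theorem stmt7 [Preadditive C] [HasZeroObject C] [HasShift C ℤ]
    [∀ n : ℤ, (shiftFunctor C n).Additive] [Pretriangulated C]
    [HasProducts.{max u v} C]
    (𝒞 𝒢 : Set C) (h𝒞 : SigmaStable 𝒞) (h𝒢 : SigmaStable 𝒢)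
    (s : ℕ) (hs : 1 ≤ s)
    (hPow : ∀ ⦃X Y : C⦄ (f : X ⟶ Y),
      compPow (fun _ _ ψ => IsCophantom 𝒞 ψ) (s - 1) f → IsPhantom 𝒢 f) :
    ∀ Y : C, ∃ (X Z : C) (φ : X ⟶ Y) (g : Y ⟶ Z) (δ : Z ⟶ X⟦(1 : ℤ)⟧),
      Triangle.mk φ g δ ∈ (distTriang C) ∧ Z ∈ ProdN 𝒞 (s - 1) ∧ IsPhantom 𝒢 φ := by
  intro Y
  obtain ⟨X, Z, φ, g, δ, hT, hZ, hφ⟩ := exists_cophantom_triangle 𝒞 (s - 1) Y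
  exact ⟨X, Z, φ, g, δ, hT, hZ, hPow φ hφ⟩
end

section
/- Let T be a triangulated category with products, and C, G two Σ-stable sets with Ψ(C)^s ⊆ Φ(G) for some s ∈ ℕ*. Then every map Y → Z in T with Z ∈ Prod_n(C) factors as Y → Z' → Z with Z' ∈ Prod_{n+s}(C) such that for every G ∈ G, the images of Hom_T(G,Y) → Hom_T(G,Z) and Hom_T(G,Z') → Hom_T(G,Z) coincide. -/
open CategoryTheory CategoryTheory.Limits CategoryTheory.Pretriangulated

universe v u

variable {C : Type u} [Category.{v} C]

lemma compPow_comp_right (I : MorphismProperty C) :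
    ∀ (k : ℕ) {X Y Z : C} (f : X ⟶ Y) (g : Y ⟶ Z),
      compPow I k f → I g → compPow I (k + 1) (f ≫ g)
  | 0, _, Y, _, f, g, hf, hg => ⟨Y, f, g, hf, hg, rfl⟩
  | (k+1), _, _, _, _, g, hf, hg => by
      obtain ⟨W, p, q, hp, hq, rfl⟩ := hf
      exact ⟨W, p, q ≫ g, hp, compPow_comp_right I k q g hq hg, by simp⟩

section Aux

variable [Preadditive C] [HasZeroObject C] [HasShift C ℤ]
    [∀ n : ℤ, (shiftFunctor C n).Additive] [Pretriangulated C]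
    [HasProducts.{max u v} C]
    (𝒞 : Set C)

lemma prodCls_shift_neg (h𝒞 : SigmaStable 𝒞) {X : C} (hX : X ∈ ProdCls 𝒞) :
    X⟦(-1 : ℤ)⟧ ∈ ProdCls 𝒞 := by
  obtain ⟨ι, f, hf, hp, r, t, hrt⟩ := hX
  haveI := hp
  refine ⟨ι, fun i => (f i)⟦(-1 : ℤ)⟧, fun i => (h𝒞 _ (hf i)).2, inferInstance,
    (PreservesProduct.iso (shiftFunctor C (-1 : ℤ)) f).inv ≫ (shiftFunctor C (-1 : ℤ)).map r,
    (shiftFunctor C (-1 : ℤ)).map t ≫ (PreservesProduct.iso (shiftFunctor C (-1 : ℤ)) f).hom, ?_⟩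
  rw [Category.assoc, Iso.hom_inv_id_assoc, ← Functor.map_comp, hrt, CategoryTheory.Functor.map_id]

lemma exists_preenvelope (V : C) :
    ∃ (P : C) (_ : P ∈ ProdCls 𝒞) (lam : V ⟶ P),
      ∀ c ∈ 𝒞, ∀ g : V ⟶ c, ∃ p : P ⟶ c, lam ≫ p = g := by
  classical
  let ι : Type (max u v) := Σ c : 𝒞, (V ⟶ (c : C))
  let f : ι → C := fun p => (p.1 : C)
  refine ⟨∏ᶜ f, ⟨ι, f, fun i => i.1.2, inferInstance, 𝟙 _, 𝟙 _, Category.id_comp _⟩,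
    Pi.lift (fun p : ι => p.2), fun c hc g => ⟨Pi.π f ⟨⟨c, hc⟩, g⟩, by simp [f]⟩⟩

lemma step_lemma (h𝒞 : SigmaStable 𝒞) {Y Zk V : C} (τ : Zk ⟶ V) (a : Y ⟶ Zk)
    (ha : a ≫ τ = 0) (m : ℕ) (hZk : Zk ∈ ProdN 𝒞 m) :
    ∃ (Z₁ W₁ : C) (b₁ : Z₁ ⟶ Zk) (τ₁ : Z₁ ⟶ W₁) (ψ₁ : W₁ ⟶ V) (a₁ : Y ⟶ Z₁),
      Z₁ ∈ ProdN 𝒞 (m + 1) ∧ IsCophantom 𝒞 ψ₁ ∧ a₁ ≫ b₁ = a ∧ a₁ ≫ τ₁ = 0 ∧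
      b₁ ≫ τ = τ₁ ≫ ψ₁ := by
  obtain ⟨P, hP, lam, hlam⟩ := exists_preenvelope 𝒞 V
  obtain ⟨W₁, ψ₁, q, hTW⟩ := distinguished_cocone_triangle₁ lam
  obtain ⟨Z₁, b₁, d, hTZ⟩ := distinguished_cocone_triangle₁ (τ ≫ lam)
  have hψlam : ψ₁ ≫ lam = 0 := comp_distTriang_mor_zero₁₂ _ hTW
  have hψ : IsCophantom 𝒞 ψ₁ := by
    intro c hc g
    obtain ⟨p, hp⟩ := hlam c hc g
    rw [← hp, ← Category.assoc, hψlam, zero_comp]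
  obtain ⟨τ₁, hcomm₁, hcomm₂⟩ := complete_distinguished_triangle_morphism₁
    (Triangle.mk b₁ (τ ≫ lam) d) (Triangle.mk ψ₁ lam q) hTZ hTW τ (𝟙 P)
    (by exact Category.comp_id _)
  have hc1 : b₁ ≫ τ = τ₁ ≫ ψ₁ := hcomm₁
  have hac : a ≫ (τ ≫ lam) = 0 := by rw [← Category.assoc, ha, zero_comp]
  obtain ⟨atil, hatil⟩ := Triangle.coyoneda_exact₂ _ hTZ a hac
  -- morphism of triangles
  let φ : (Triangle.mk b₁ (τ ≫ lam) d) ⟶ (Triangle.mk ψ₁ lam q) :=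
    { hom₁ := τ₁
      hom₂ := τ
      hom₃ := 𝟙 P
      comm₁ := hcomm₁
      comm₂ := by exact Category.comp_id _
      comm₃ := hcomm₂ }
  have key : (Triangle.mk b₁ (τ ≫ lam) d).invRotate.mor₁ ≫ τ₁ =
      (𝟙 P)⟦(-1 : ℤ)⟧' ≫ (Triangle.mk ψ₁ lam q).invRotate.mor₁ :=
    ((invRotate C).map φ).comm₁
  have key' : (Triangle.mk b₁ (τ ≫ lam) d).invRotate.mor₁ ≫ τ₁ =
      (Triangle.mk ψ₁ lam q).invRotate.mor₁ := by
    rw [key, CategoryTheory.Functor.map_id]; exact Category.id_comp _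
  have hatilτψ : (atil ≫ τ₁) ≫ (Triangle.mk ψ₁ lam q).invRotate.mor₂ = 0 := by
    show (atil ≫ τ₁) ≫ ψ₁ = 0
    have hat' : a = atil ≫ b₁ := hatil
    calc (atil ≫ τ₁) ≫ ψ₁ = atil ≫ (τ₁ ≫ ψ₁) := Category.assoc _ _ _
      _ = atil ≫ (b₁ ≫ τ) := (congrArg (atil ≫ ·) hc1).symm
      _ = a ≫ τ := by rw [hat']; exact (Category.assoc _ _ _).symm
      _ = 0 := ha
  obtain ⟨ε, hε⟩ := Triangle.coyoneda_exact₂ _ (inv_rot_of_distTriang _ hTW) (atil ≫ τ₁) hatilτψ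
  -- retyped copies
  let atil' : Y ⟶ Z₁ := atil
  let τ₁' : Z₁ ⟶ W₁ := τ₁
  let ι₀ : P⟦(-1 : ℤ)⟧ ⟶ Z₁ := (Triangle.mk b₁ (τ ≫ lam) d).invRotate.mor₁
  let d₀ : Zk ⟶ (P⟦(-1 : ℤ)⟧)⟦(1 : ℤ)⟧ := (Triangle.mk b₁ (τ ≫ lam) d).invRotate.mor₃
  let δ₀ : P⟦(-1 : ℤ)⟧ ⟶ W₁ := (Triangle.mk ψ₁ lam q).invRotate.mor₁
  let ε' : Y ⟶ P⟦(-1 : ℤ)⟧ := ε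
  have hat : a = atil' ≫ b₁ := hatil
  have hc1' : b₁ ≫ τ = τ₁' ≫ ψ₁ := hc1
  have key2 : ι₀ ≫ τ₁' = δ₀ := key'
  have hε2 : atil' ≫ τ₁' = ε' ≫ δ₀ := hε
  have h02 : ι₀ ≫ b₁ = 0 :=
    comp_distTriang_mor_zero₁₂ _ (inv_rot_of_distTriang _ hTZ)
  refine ⟨Z₁, W₁, b₁, τ₁', ψ₁, atil' - ε' ≫ ι₀, ?_, hψ, ?_, ?_, hc1'⟩
  · exact ⟨P⟦(-1 : ℤ)⟧, Zk, ι₀, b₁, d₀,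
      inv_rot_of_distTriang _ hTZ, prodCls_shift_neg 𝒞 h𝒞 hP, hZk⟩
  · rw [Preadditive.sub_comp, Category.assoc, h02, comp_zero, sub_zero]
    exact hat.symm
  · rw [Preadditive.sub_comp, Category.assoc, key2, ← hε2, sub_self]

lemma tower_lemma (h𝒞 : SigmaStable 𝒞) :
    ∀ (k : ℕ) {Y Zk V : C} (τ : Zk ⟶ V) (a : Y ⟶ Zk), a ≫ τ = 0 →
      ∀ (m : ℕ), Zk ∈ ProdN 𝒞 m →
      ∃ (Z' : C) (a' : Y ⟶ Z') (b : Z' ⟶ Zk) (W : C) (σ : Z' ⟶ W) (ψ : W ⟶ V),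
        Z' ∈ ProdN 𝒞 (m + k + 1) ∧ a' ≫ b = a ∧
        compPow (fun _ _ ψ => IsCophantom 𝒞 ψ) k ψ ∧ b ≫ τ = σ ≫ ψ := by
  intro k
  induction k with
  | zero =>
    intro Y Zk V τ a ha m hZk
    obtain ⟨Z₁, W₁, b₁, τ₁, ψ₁, a₁, hZ₁, hψ, hab, _, hbτ⟩ :=
      step_lemma 𝒞 h𝒞 τ a ha m hZk
    exact ⟨Z₁, a₁, b₁, W₁, τ₁, ψ₁, hZ₁, hab, hψ, hbτ⟩
  | succ k ih =>
    intro Y Zk V τ a ha m hZk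
    obtain ⟨Z₁, W₁, b₁, τ₁, ψ₁, a₁, hZ₁, hψ, hab, haτ, hbτ⟩ :=
      step_lemma 𝒞 h𝒞 τ a ha m hZk
    obtain ⟨Z', a', b', W, σ, ψ', hZ', hab', hpow, hbτ'⟩ :=
      ih τ₁ a₁ haτ (m + 1) hZ₁
    refine ⟨Z', a', b' ≫ b₁, W, σ, ψ' ≫ ψ₁, ?_, ?_, ?_, ?_⟩
    · have harith : m + 1 + k + 1 = m + (k + 1) + 1 := by omega
      rw [← harith]; exact hZ'
    · rw [← Category.assoc, hab', hab]
    · exact compPow_comp_right _ k ψ' ψ₁ hpow hψ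
    · rw [Category.assoc, hbτ, ← Category.assoc, hbτ', Category.assoc]

end Aux

/-- If `Ψ(𝒞)^s ⊆ Φ(𝒢)` then every map `Y ⟶ Z` with `Z ∈ Prod_n(𝒞)` factors as
`Y ⟶ Z' ⟶ Z` with `Z' ∈ Prod_{n+s}(𝒞)`, such that for each `G ∈ 𝒢` the images of
`Hom(G,Y) → Hom(G,Z)` and `Hom(G,Z') → Hom(G,Z)` coincide. -/
theorem stmt8 [Preadditive C] [HasZeroObject C] [HasShift C ℤ]
    [∀ n : ℤ, (shiftFunctor C n).Additive] [Pretriangulated C]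
    [HasProducts.{max u v} C]
    (𝒞 𝒢 : Set C) (h𝒞 : SigmaStable 𝒞) (h𝒢 : SigmaStable 𝒢)
    (s : ℕ) (hs : 1 ≤ s)
    (hPow : ∀ ⦃X Y : C⦄ (f : X ⟶ Y),
      compPow (fun _ _ ψ => IsCophantom 𝒞 ψ) (s - 1) f → IsPhantom 𝒢 f)
    (n : ℕ) (hn : 1 ≤ n) {Y Z : C} (hZ : Z ∈ ProdN 𝒞 (n - 1)) (e : Y ⟶ Z) :
    ∃ (Z' : C) (a : Y ⟶ Z') (b : Z' ⟶ Z), Z' ∈ ProdN 𝒞 (n + s - 1) ∧ a ≫ b = e ∧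
      ∀ G ∈ 𝒢, Set.range (fun f : G ⟶ Y => f ≫ e) =
        Set.range (fun f : G ⟶ Z' => f ≫ b) := by
  obtain ⟨V, u, w, hTe⟩ := distinguished_cocone_triangle e
  have heu : e ≫ u = 0 := comp_distTriang_mor_zero₁₂ _ hTe
  obtain ⟨Z', a', b, W, σ, ψ, hZ', hab, hψpow, hbτ⟩ :=
    tower_lemma 𝒞 h𝒞 (s - 1) u e heu (n - 1) hZ
  refine ⟨Z', a', b, ?_, hab, ?_⟩
  · have harith : n + s - 1 = n - 1 + (s - 1) + 1 := by omega
    rw [harith]; exact hZ'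
  · intro G hG
    apply Set.Subset.antisymm
    · rintro _ ⟨f, rfl⟩
      exact ⟨f ≫ a', by simp only [Category.assoc, hab]⟩
    · rintro _ ⟨f, rfl⟩
      have h0 : (f ≫ b) ≫ u = 0 := by
        rw [Category.assoc, hbτ, ← Category.assoc]
        exact hPow ψ hψpow G hG (f ≫ σ)
      obtain ⟨g, hg⟩ := Triangle.coyoneda_exact₂ _ hTe (f ≫ b) h0
      exact ⟨g, hg.symm⟩
end

section
/- Let T be a triangulated category with products and coproducts admitting a set of symmetric generators; that is, a generating set G and a set C such that for every map f: X → Y in T, the maps Hom(G,X) → Hom(G,Y) are surjective for all G ∈ G if and only if the maps Hom(Y,C) → Hom(X,C) are injective for all C ∈ C. Then, after completing f to a triangle W → X →^f Y → ΣW, this symmetry condition is equivalent to the equality of ideals Φ(G) = Ψ(C) (after Σ-closure of G and C). -/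
open CategoryTheory CategoryTheory.Limits CategoryTheory.Pretriangulated

universe v u

variable {C : Type u} [Category.{v} C]

/-- For Σ-stable sets `𝒢`, `𝒞`, Krause's symmetry condition — for every map
`f : X ⟶ Y`, the maps `Hom(G,X) → Hom(G,Y)` are surjective for all `G ∈ 𝒢` iff the
maps `Hom(Y,c) → Hom(X,c)` are injective for all `c ∈ 𝒞` — is equivalent (via
completing maps to triangles) to the equality of ideals `Φ(𝒢) = Ψ(𝒞)`. -/
theorem stmt12 [Preadditive C] [HasZeroObject C] [HasShift C ℤ]
    [∀ n : ℤ, (shiftFunctor C n).Additive] [Pretriangulated C]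
    [HasProducts.{max u v} C] [HasCoproducts.{max u v} C]
    (𝒢 𝒞 : Set C) (h𝒢 : SigmaStable 𝒢) (h𝒞 : SigmaStable 𝒞)
    (hgen : ∀ X : C, (∀ G ∈ 𝒢, ∀ f : G ⟶ X, f = 0) → IsZero X) :
    (∀ {X Y : C} (f : X ⟶ Y),
        (∀ G ∈ 𝒢, Function.Surjective (fun g : G ⟶ X => g ≫ f)) ↔
        (∀ c ∈ 𝒞, Function.Injective (fun g : Y ⟶ c => f ≫ g))) ↔
    (∀ {X Y : C} (φ : X ⟶ Y), IsPhantom 𝒢 φ ↔ IsCophantom 𝒞 φ) := by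
  constructor
  · intro hsym X Y φ
    obtain ⟨W, w, h, hT⟩ := distinguished_cocone_triangle₁ φ
    have h0 : w ≫ φ = 0 := comp_distTriang_mor_zero₁₂ _ hT
    have key := hsym w
    have h1 : IsPhantom 𝒢 φ ↔ (∀ G ∈ 𝒢, Function.Surjective (fun g : G ⟶ W => g ≫ w)) := by
      constructor
      · intro hph G hG a
        obtain ⟨b, hb⟩ := Triangle.coyoneda_exact₂ _ hT a (hph G hG a)
        exact ⟨b, hb.symm⟩
      · intro hsurj G hG a
        obtain ⟨b, hb⟩ := hsurj G hG a
        have hb' : b ≫ w = a := hb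
        rw [← hb', Category.assoc, h0, Limits.comp_zero]
    have h2 : IsCophantom 𝒞 φ ↔ (∀ c ∈ 𝒞, Function.Injective (fun g : X ⟶ c => w ≫ g)) := by
      constructor
      · intro hcoph c hc u v huv
        have huv' : w ≫ u = w ≫ v := huv
        have hz : w ≫ (u - v) = 0 := by rw [Preadditive.comp_sub, huv', sub_self]
        obtain ⟨s, hs⟩ := Triangle.yoneda_exact₂ _ hT (u - v) hz
        have hzz : u - v = 0 := by rw [hs]; exact hcoph c hc s
        exact sub_eq_zero.mp hzz
      · intro hinj c hc t
        apply hinj c hc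
        show w ≫ φ ≫ t = w ≫ 0
        rw [← Category.assoc, h0, Limits.zero_comp, Limits.comp_zero]
    rw [h1, h2, key]
  · intro hid X Y f
    obtain ⟨Z, g, h, hT⟩ := distinguished_cocone_triangle f
    have h0 : f ≫ g = 0 := comp_distTriang_mor_zero₁₂ _ hT
    have key := hid g
    have h1 : (∀ G ∈ 𝒢, Function.Surjective (fun a : G ⟶ X => a ≫ f)) ↔ IsPhantom 𝒢 g := by
      constructor
      · intro hsurj G hG a
        obtain ⟨b, hb⟩ := hsurj G hG a
        have hb' : b ≫ f = a := hb
        rw [← hb', Category.assoc, h0, Limits.comp_zero]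
      · intro hph G hG a
        obtain ⟨b, hb⟩ := Triangle.coyoneda_exact₂ _ hT a (hph G hG a)
        exact ⟨b, hb.symm⟩
    have h2 : (∀ c ∈ 𝒞, Function.Injective (fun a : Y ⟶ c => f ≫ a)) ↔ IsCophantom 𝒞 g := by
      constructor
      · intro hinj c hc t
        apply hinj c hc
        show f ≫ g ≫ t = f ≫ 0
        rw [← Category.assoc, h0, Limits.zero_comp, Limits.comp_zero]
      · intro hcoph c hc u v huv
        have huv' : f ≫ u = f ≫ v := huv
        have hz : f ≫ (u - v) = 0 := by rw [Preadditive.comp_sub, huv', sub_self]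
        obtain ⟨s, hs⟩ := Triangle.yoneda_exact₂ _ hT (u - v) hz
        have hzz : u - v = 0 := by rw [hs]; exact hcoph c hc s
        exact sub_eq_zero.mp hzz
    rw [h1, h2, key]
end
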